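/- Let k be an algebraically closed field of characteristic p > 3. If a homogeneous quartic polynomial f in k[x0,x1,x2] is invariant under the substitution g: (x0,x1,x2) ↦ (x0+x1, x1, x2), then f lies in the subring k[N, x1, x2] where N = ∏_{i=0}^{p-1}(x0 + i·x1); in particular, since deg N = p > 4, f lies in k[x1,x2] and the plane curve V(f) is a union of lines through the point [1:0:0], hence singular. -/

import Mathlib

open MvPolynomial

/-- In characteristic `p > 3`, a homogeneous quartic invariant under
`(x0,x1,x2) ↦ (x0+x1,x1,x2)` lies in `k[N,x1,x2]` with `N = ∏ (x0 + i x1)`, hence in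
`k[x1,x2]`, and the curve it defines is singular at `[1:0:0]`. -/
theorem stmt_0 (k : Type*) [Field k] [IsAlgClosed k] (p : ℕ) [Fact p.Prime]
    [CharP k p] (hp3 : 3 < p)
    (f : MvPolynomial (Fin 3) k) (hf : f.IsHomogeneous 4)
    (hinv : aeval ![X 0 + X 1, X 1, X 2] f = f) :
    f ∈ Algebra.adjoin k
        ({∏ i ∈ Finset.range p, (X 0 + C ((i : k)) * X 1), X 1, X 2} :
          Set (MvPolynomial (Fin 3) k)) ∧
    f ∈ Algebra.adjoin k ({X 1, X 2} : Set (MvPolynomial (Fin 3) k)) ∧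
    eval ![1, 0, 0] f = 0 ∧
    ∀ i : Fin 3, eval ![1, 0, 0] (pderiv i f) = 0 := by
  classical
  -- Step 1: the key fact `degreeOf 0 f = 0`.
  have hdeg0 : degreeOf 0 f = 0 := by
    set c : MvPolynomial (Fin 2) k := X 0 with hc
    have hc0 : c ≠ 0 := X_ne_zero 0
    set P : Polynomial (MvPolynomial (Fin 2) k) := finSuccEquiv k 2 f with hP
    have e1 : finSuccEquiv k 2 (X 1) = Polynomial.C (X 0) := by
      have h01 : ((0 : Fin 2).succ) = (1 : Fin 3) := rfl
      rw [← h01]; exact finSuccEquiv_X_succ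
    have e2 : finSuccEquiv k 2 (X 2) = Polynomial.C (X 1) := by
      have h12 : ((1 : Fin 2).succ) = (2 : Fin 3) := rfl
      rw [← h12]; exact finSuccEquiv_X_succ
    have hhom : ((Polynomial.aeval (Polynomial.X + Polynomial.C c)).restrictScalars k).comp
        (finSuccEquiv k 2).toAlgHom
        = (finSuccEquiv k 2).toAlgHom.comp (aeval ![X 0 + X 1, X 1, X 2]) := by
      apply MvPolynomial.algHom_ext
      intro i
      fin_cases i <;>
        simp [finSuccEquiv_X_zero, e1, e2, hc, Polynomial.algebraMap_eq,
          Matrix.cons_val_zero, Matrix.cons_val_one, Matrix.head_cons]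
    have hcomp : P.comp (Polynomial.X + Polynomial.C c) = P := by
      have h := AlgHom.congr_fun hhom f
      simp only [AlgHom.coe_comp, Function.comp_apply, AlgHom.coe_restrictScalars',
        AlgEquiv.toAlgHom_eq_coe, AlgEquiv.coe_algHom, hinv] at h
      rw [Polynomial.comp_eq_aeval]
      exact h
    have hshift : ∀ x : MvPolynomial (Fin 2) k, P.eval (x + c) = P.eval x := by
      intro x
      have h := congrArg (Polynomial.eval x) hcomp
      simpa [Polynomial.eval_comp] using h
    have heval : ∀ n : ℕ, P.eval ((n : MvPolynomial (Fin 2) k) * c) = P.eval 0 := by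
      intro n
      induction n with
      | zero => simp
      | succ n ih => rw [Nat.cast_succ, add_mul, one_mul, hshift, ih]
    have hQ0 : P - Polynomial.C (P.eval 0) = 0 := by
      apply Polynomial.eq_zero_of_natDegree_lt_card_of_eval_eq_zero' _
        ((Finset.range p).image fun n : ℕ => (n : MvPolynomial (Fin 2) k) * c)
      · intro x hx
        obtain ⟨n, hn, rfl⟩ := Finset.mem_image.mp hx
        simp [heval n]
      · have hcard : ((Finset.range p).image fun n : ℕ => (n : MvPolynomial (Fin 2) k) * c).card = p := by
          rw [Finset.card_image_of_injOn, Finset.card_range]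
          intro a ha b hb hab
          simp only [Finset.coe_range, Set.mem_Iio] at ha hb
          exact CharP.natCast_injOn_Iio _ p ha hb (mul_right_cancel₀ hc0 hab)
        rw [hcard, Polynomial.natDegree_sub_C]
        have hP4 : P.natDegree ≤ 4 := by
          rw [hP, natDegree_finSuccEquiv]
          exact (degreeOf_le_totalDegree f 0).trans hf.totalDegree_le
        have hp4 : p ≠ 4 := by
          rintro rfl
          exact absurd (Fact.out : Nat.Prime 4) (by norm_num)
        omega
    have hPC : P = Polynomial.C (P.eval 0) := by rwa [sub_eq_zero] at hQ0
    rw [← natDegree_finSuccEquiv, ← hP, hPC, Polynomial.natDegree_C]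
  have hm0 : ∀ m ∈ f.support, m 0 = 0 := by
    intro m hm
    have h := Finset.le_sup (f := fun (m : Fin 3 →₀ ℕ) => m 0) hm
    rw [← degreeOf_eq_sup, hdeg0] at h
    simpa using h
  have hsum : ∀ m ∈ f.support, m 0 + m 1 + m 2 = 4 := by
    intro m hm
    have h4 := hf (mem_support_iff.mp hm)
    simpa [Finsupp.weight_apply, Finsupp.sum_fintype, Fin.sum_univ_three] using h4
  have h0vars : (0 : Fin 3) ∉ f.vars := by
    intro h
    obtain ⟨d, hd, h0d⟩ := (mem_vars _).mp h
    exact (Finsupp.mem_support_iff.mp h0d) (hm0 d hd)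
  have hadj2 : f ∈ Algebra.adjoin k ({X 1, X 2} : Set (MvPolynomial (Fin 3) k)) := by
    have himg : (X '' ({1, 2} : Set (Fin 3)) : Set (MvPolynomial (Fin 3) k)) = {X 1, X 2} := by
      rw [Set.image_insert_eq, Set.image_singleton]
    rw [← himg, ← supported_eq_adjoin_X]
    rw [mem_supported]
    intro i hi
    have hne : i ≠ 0 := by
      rintro rfl
      exact h0vars hi
    fin_cases i
    · exact absurd rfl hne
    · exact Set.mem_insert _ _
    · exact Set.mem_insert_of_mem _ rfl
  -- helper: evaluation of monomials with positive degree in x1 or x2 vanishes at (1,0,0)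
  have hmon : ∀ (s : Fin 3 →₀ ℕ) (a : k), s 1 + s 2 ≠ 0 →
      eval ![1, 0, 0] (monomial s a) = 0 := by
    intro s a hs
    rw [eval_monomial]
    have : ∃ j ∈ s.support, (![1, 0, 0] : Fin 3 → k) j ^ s j = 0 := by
      rcases Nat.eq_zero_or_pos (s 1) with h1 | h1
      · refine ⟨2, Finsupp.mem_support_iff.mpr (by omega), ?_⟩
        simp [zero_pow (by omega : s 2 ≠ 0)]
      · refine ⟨1, Finsupp.mem_support_iff.mpr (by omega), ?_⟩
        simp [zero_pow (by omega : s 1 ≠ 0)]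
    obtain ⟨j, hj, hw⟩ := this
    rw [Finsupp.prod, Finset.prod_eq_zero hj hw, mul_zero]
  refine ⟨Algebra.adjoin_mono (Set.subset_insert _ _) hadj2, hadj2, ?_, ?_⟩
  · -- eval at (1,0,0) is 0
    conv_lhs => rw [as_sum f]
    rw [map_sum]
    apply Finset.sum_eq_zero
    intro m hm
    exact hmon m _ (by have := hm0 m hm; have := hsum m hm; omega)
  · intro i
    fin_cases i
    · show eval ![1, 0, 0] (pderiv 0 f) = 0
      rw [pderiv_eq_zero_of_notMem_vars h0vars, map_zero]
    · show eval ![1, 0, 0] (pderiv 1 f) = 0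
      have h := congrArg (fun g => eval ![1, 0, 0] (pderiv 1 g)) (as_sum f)
      simp only [map_sum] at h
      rw [h]
      apply Finset.sum_eq_zero
      intro m hm
      rw [pderiv_monomial]
      by_cases h1 : m 1 = 0
      · simp [h1]
      · apply hmon
        have ha := hm0 m hm
        have hb := hsum m hm
        simp only [Finsupp.tsub_apply, Finsupp.single_apply,
          show ((1 : Fin 3) = 2) = False from by decide,
          show ((2 : Fin 3) = 1) = False from by decide, if_true, if_false]
        omega
    · show eval ![1, 0, 0] (pderiv 2 f) = 0
      have h := congrArg (fun g => eval ![1, 0, 0] (pderiv 2 g)) (as_sum f)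
      simp only [map_sum] at h
      rw [h]
      apply Finset.sum_eq_zero
      intro m hm
      rw [pderiv_monomial]
      by_cases h2 : m 2 = 0
      · simp [h2]
      · apply hmon
        have ha := hm0 m hm
        have hb := hsum m hm
        simp only [Finsupp.tsub_apply, Finsupp.single_apply,
          show ((1 : Fin 3) = 2) = False from by decide,
          show ((2 : Fin 3) = 1) = False from by decide, if_true, if_false]
        omega
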